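/- Let 𝒯₀ be an E-closed set of complete theories. If 𝒯'₀ ⊆ 𝒯₀ is a minimal generating set for 𝒯₀ (Cl_E(𝒯'₀) = 𝒯₀ and no proper subset generates 𝒯₀), then 𝒯'₀ is the least generating set: 𝒯'₀ is contained in every generating subset of 𝒯₀. -/
import Mathlib


open FirstOrder

/-- The E-closure of a family of theories: the family itself together with all
maximal (complete) theories each of whose sentences belongs to infinitely many
members of the family (Proposition 2.2 of the paper). -/
def ClE {L : Language} (𝒯 : Set L.Theory) : Set L.Theory :=
  𝒯 ∪ {T | T.IsMaximal ∧ ∀ φ ∈ T, {T' ∈ 𝒯 | φ ∈ T'}.Infinite}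

/-- Theorem 3.2, (2) ⇒ (1): a minimal generating set of an E-closed set is least. -/
theorem minimal_generating_is_least {L : Language}
    (𝒯₀ 𝒯'₀ : Set L.Theory)
    (hcomp : ∀ T ∈ 𝒯₀, T.IsMaximal)
    (hclosed : ClE 𝒯₀ = 𝒯₀)
    (hsub : 𝒯'₀ ⊆ 𝒯₀)
    (hgen : ClE 𝒯'₀ = 𝒯₀)
    (hmin : ∀ S ⊂ 𝒯'₀, ClE S ≠ 𝒯₀) :
    ∀ 𝒯''₀ ⊆ 𝒯₀, ClE 𝒯''₀ = 𝒯₀ → 𝒯'₀ ⊆ 𝒯''₀ := by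
  intro 𝒯'' hsub'' hgen'' T hT
  by_contra hTnot
  have hT0 : T ∈ 𝒯₀ := hsub hT
  -- T is a limit point of 𝒯''
  have hTcl : T ∈ ClE 𝒯'' := hgen''.symm ▸ hT0
  have hlim'' : ∀ φ ∈ T, {S ∈ 𝒯'' | φ ∈ S}.Infinite := by
    rcases hTcl with h | h
    · exact absurd h hTnot
    · exact h.2
  -- key: every sentence of T lies in infinitely many members of 𝒯'₀ \ {T}
  have key : ∀ φ ∈ T, {S ∈ 𝒯'₀ \ {T} | φ ∈ S}.Infinite := by
    intro φ hφ
    have hA := hlim'' φ hφ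
    by_cases hcase : ∃ S, S ∈ 𝒯'' ∧ φ ∈ S ∧ S ≠ T ∧ S ∉ 𝒯'₀
    · obtain ⟨S, hS'', hφS, hSne, hSnot⟩ := hcase
      have hScl : S ∈ ClE 𝒯'₀ := hgen.symm ▸ (hsub'' hS'')
      rcases hScl with h | h
      · exact absurd h hSnot
      · have hinf := h.2 φ hφS
        have : ({S' ∈ 𝒯'₀ | φ ∈ S'} \ {T}).Infinite :=
          hinf.diff (Set.finite_singleton T)
        refine this.mono ?_
        rintro x ⟨⟨hx1, hx2⟩, hx3⟩
        exact ⟨⟨hx1, hx3⟩, hx2⟩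
    · push_neg at hcase
      have : ({S ∈ 𝒯'' | φ ∈ S} \ {T}).Infinite := hA.diff (Set.finite_singleton T)
      refine this.mono ?_
      rintro x ⟨⟨hx1, hx2⟩, hx3⟩
      exact ⟨⟨hcase x hx1 hx2 hx3, hx3⟩, hx2⟩
  -- 𝒯'₀ \ {T} generates 𝒯₀, contradicting minimality
  have hss : 𝒯'₀ \ {T} ⊂ 𝒯'₀ := by
    constructor
    · exact Set.diff_subset
    · intro hle
      exact (hle hT).2 rfl
  apply hmin _ hss
  ext T'
  constructor
  · rintro (h | h)
    · exact hsub h.1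
    · have : T' ∈ ClE 𝒯'₀ := by
        right
        refine ⟨h.1, fun φ hφ => (h.2 φ hφ).mono ?_⟩
        rintro x ⟨⟨hx1, _⟩, hx2⟩
        exact ⟨hx1, hx2⟩
      exact hgen ▸ this
  · intro h
    by_cases hTe : T' = T
    · subst hTe
      exact Or.inr ⟨hcomp T' hT0, key⟩
    · have hcl : T' ∈ ClE 𝒯'₀ := hgen.symm ▸ h
      rcases hcl with h' | h'
      · exact Or.inl ⟨h', hTe⟩
      · right
        refine ⟨h'.1, fun φ hφ => ((h'.2 φ hφ).diff (Set.finite_singleton T)).mono ?_⟩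
        rintro x ⟨⟨hx1, hx2⟩, hx3⟩
        exact ⟨⟨hx1, hx3⟩, hx2⟩
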